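/- Let (A,d_A) and (B,d_B) be dg-algebras over a graded-commutative dg-division ring (K,d_K) and suppose φ:(A,d_A)→(B,d_B) is a dg-separable dg-extension. Then a short exact sequence of dg-modules 0→(L,δ_L)→(M,δ_M)→(N,δ_N)→0 over (B,d_B) is split (as a sequence of dg-(B,d_B)-modules) if and only if it is split when considered, via restriction along φ, as a sequence of dg-modules over (A,d_A). -/

import Mathlib

open scoped TensorProduct

section DGCore

variable {A : Type} [Ring A] {B : Type} [Ring B]

/-- `(A, d)` together with the grading `𝒜` is a differential graded ring:
`d` is a square-zero additive endomorphism of degree `1` satisfying the graded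
Leibniz rule. -/
structure IsDGRing (𝒜 : ℤ → AddSubgroup A) (d : A →+ A) : Prop where
  d_sq : ∀ x, d (d x) = 0
  d_mem : ∀ (i : ℤ), ∀ x ∈ 𝒜 i, d x ∈ 𝒜 (i + 1)
  leibniz : ∀ (i : ℤ) (a b : A), a ∈ 𝒜 i →
    d (a * b) = d a * b + ((Int.negOnePow i : ℤ)) • (a * d b)

/-- A homomorphism of differential graded rings (a dg-extension). -/
structure IsDGHom (𝒜 : ℤ → AddSubgroup A) (dA : A →+ A)
    (𝒝 : ℤ → AddSubgroup B) (dB : B →+ B) (φ : A →+* B) : Prop where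
  map_mem : ∀ (i : ℤ), ∀ x ∈ 𝒜 i, φ x ∈ 𝒝 i
  map_d : ∀ x, φ (dA x) = dB (φ x)

/-- Graded commutativity: `a * b = (-1)^{|a||b|} b * a` for homogeneous elements. -/
def IsGradedComm (𝒜 : ℤ → AddSubgroup A) : Prop :=
  ∀ (i j : ℤ) (a b : A), a ∈ 𝒜 i → b ∈ 𝒜 j →
    a * b = ((Int.negOnePow (i * j) : ℤ)) • (b * a)

/-- A dg-ring is acyclic if its homology vanishes, i.e. every cycle is a boundary. -/
def IsAcyclic (d : A →+ A) : Prop := ∀ x, d x = 0 → ∃ y, d y = x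

/-- A dg left ideal: a graded additive subgroup closed under the differential and
under left multiplication. -/
def IsDGLeftIdeal (𝒜 : ℤ → AddSubgroup A) [GradedRing 𝒜] (d : A →+ A)
    (I : AddSubgroup A) : Prop :=
  (∀ (a : A), ∀ x ∈ I, a * x ∈ I) ∧ (∀ x ∈ I, d x ∈ I) ∧
    (∀ x ∈ I, ∀ i : ℤ, (DirectSum.decompose 𝒜 x i : A) ∈ I)

/-- A dg right ideal. -/
def IsDGRightIdeal (𝒜 : ℤ → AddSubgroup A) [GradedRing 𝒜] (d : A →+ A)
    (I : AddSubgroup A) : Prop :=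
  (∀ (a : A), ∀ x ∈ I, x * a ∈ I) ∧ (∀ x ∈ I, d x ∈ I) ∧
    (∀ x ∈ I, ∀ i : ℤ, (DirectSum.decompose 𝒜 x i : A) ∈ I)

/-- A dg-division ring: the only dg left ideals and the only dg right ideals
are `0` and the whole ring. -/
def IsDGDivisionRing (𝒜 : ℤ → AddSubgroup A) [GradedRing 𝒜] (d : A →+ A) : Prop :=
  (0 : A) ≠ 1 ∧ (∀ I, IsDGLeftIdeal 𝒜 d I → I = ⊥ ∨ I = ⊤) ∧
    (∀ I, IsDGRightIdeal 𝒜 d I → I = ⊥ ∨ I = ⊤)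

/-- A graded division ring (gr-field): every nonzero homogeneous element is invertible. -/
def IsGradedDivisionRing (𝒜 : ℤ → AddSubgroup A) : Prop :=
  (0 : A) ≠ 1 ∧ ∀ (i : ℤ) (x : A), x ∈ 𝒜 i → x ≠ 0 → IsUnit x

/-- The relations defining `B ⊗[A] B` inside `B ⊗[ℤ] B`, for an extension `φ : A →+* B`. -/
def sepRel (φ : A →+* B) : Submodule ℤ (B ⊗[ℤ] B) :=
  Submodule.span ℤ {x | ∃ (b b' : B) (a : A),
    x = (b * φ a) ⊗ₜ[ℤ] b' - b ⊗ₜ[ℤ] (φ a * b')}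

/-- The balanced tensor product `B ⊗[A] B` for an extension `φ : A →+* B`. -/
abbrev SepTensor (φ : A →+* B) := (B ⊗[ℤ] B) ⧸ sepRel φ

/-- The canonical projection `B ⊗[ℤ] B → B ⊗[A] B`. -/
noncomputable def sepMk (φ : A →+* B) : B ⊗[ℤ] B →ₗ[ℤ] SepTensor φ := (sepRel φ).mkQ

/-- The multiplication map `μ : B ⊗[A] B → B`. -/
noncomputable def sepMul (φ : A →+* B) : SepTensor φ →ₗ[ℤ] B :=
  Submodule.liftQ _ (TensorProduct.lift (LinearMap.mul ℤ B)) (by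
    rw [sepRel, Submodule.span_le]
    rintro x ⟨b, b', a, rfl⟩
    simp [SetLike.mem_coe, LinearMap.mem_ker, mul_assoc]
    change TensorProduct.lift (LinearMap.mul ℤ B) ((b * φ a) ⊗ₜ[ℤ] b' - b ⊗ₜ[ℤ] (φ a * b')) = 0
    rw [map_sub, TensorProduct.lift.tmul, TensorProduct.lift.tmul]
    simp [mul_assoc])

/-- Left multiplication by `b` on `B ⊗[A] B`. -/
noncomputable def sepLMul (φ : A →+* B) (b : B) : SepTensor φ →ₗ[ℤ] SepTensor φ :=
  Submodule.mapQ _ _ (TensorProduct.map (LinearMap.mulLeft ℤ b) LinearMap.id) (by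
    rw [sepRel, Submodule.span_le]
    rintro x ⟨b₀, b', a, rfl⟩
    simp only [SetLike.mem_coe, Submodule.mem_comap, map_sub, TensorProduct.map_tmul,
      LinearMap.mulLeft_apply, LinearMap.id_apply]
    exact Submodule.subset_span ⟨b * b₀, b', a, by erw [map_sub, TensorProduct.map_tmul, TensorProduct.map_tmul]; simp [mul_assoc]⟩)

/-- Right multiplication by `b` on `B ⊗[A] B`. -/
noncomputable def sepRMul (φ : A →+* B) (b : B) : SepTensor φ →ₗ[ℤ] SepTensor φ :=
  Submodule.mapQ _ _ (TensorProduct.map LinearMap.id (LinearMap.mulRight ℤ b)) (by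
    rw [sepRel, Submodule.span_le]
    rintro x ⟨b₀, b', a, rfl⟩
    simp only [SetLike.mem_coe, Submodule.mem_comap, map_sub, TensorProduct.map_tmul,
      LinearMap.mulRight_apply, LinearMap.id_apply]
    exact Submodule.subset_span ⟨b₀, b' * b, a, by erw [map_sub, TensorProduct.map_tmul, TensorProduct.map_tmul]; simp [mul_assoc]⟩)

/-- The grading on `B ⊗[A] B`: the degree `n` part is generated by the classes of
`b ⊗ b'` with `b, b'` homogeneous of degrees summing to `n`. -/
noncomputable def sepGrading (φ : A →+* B) (𝒝 : ℤ → AddSubgroup B) (n : ℤ) :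
    AddSubgroup (SepTensor φ) :=
  AddSubgroup.closure {x | ∃ (i j : ℤ) (b b' : B), b ∈ 𝒝 i ∧ b' ∈ 𝒝 j ∧ i + j = n ∧
    x = sepMk φ (b ⊗ₜ[ℤ] b')}

/-- The sign involution `b ↦ (-1)^{|b|} b` of a graded ring. -/
noncomputable def signMap (𝒝 : ℤ → AddSubgroup B) [GradedRing 𝒝] : B →+ B :=
  (DirectSum.toAddMonoid fun i =>
      (smulAddHom ℤ B ((Int.negOnePow i : ℤ))).comp (𝒝 i).subtype).comp
    (DirectSum.decomposeAddEquiv 𝒝).toAddMonoidHom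

lemma signMap_of_mem (𝒝 : ℤ → AddSubgroup B) [GradedRing 𝒝] {i : ℤ} {x : B}
    (hx : x ∈ 𝒝 i) : signMap 𝒝 x = ((Int.negOnePow i : ℤ)) • x := by
  classical
  unfold signMap
  simp only [AddMonoidHom.comp_apply, AddEquiv.coe_toAddMonoidHom,
    DirectSum.decomposeAddEquiv_apply, DirectSum.decompose_of_mem 𝒝 hx,
    DirectSum.toAddMonoid_of]
  rfl

/-- The differential `d ⊗ 1 + ε ⊗ d` on `B ⊗[ℤ] B` (with Koszul sign). -/
noncomputable def sepDiffPre (𝒝 : ℤ → AddSubgroup B) [GradedRing 𝒝] (dB : B →+ B) :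
    B ⊗[ℤ] B →ₗ[ℤ] B ⊗[ℤ] B :=
  TensorProduct.map dB.toIntLinearMap LinearMap.id +
    TensorProduct.map (signMap 𝒝).toIntLinearMap dB.toIntLinearMap

/-- `D` is the differential induced on `B ⊗[A] B` by `d_B ⊗ 1 + ε ⊗ d_B`. -/
def IsSepDiff (φ : A →+* B) (𝒝 : ℤ → AddSubgroup B) [GradedRing 𝒝] (dB : B →+ B)
    (D : SepTensor φ →+ SepTensor φ) : Prop :=
  ∀ x : B ⊗[ℤ] B, D (sepMk φ x) = sepMk φ (sepDiffPre 𝒝 dB x)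

/-- `ρ : B → B ⊗[A] B` is a `B`-`B`-bimodule section of the multiplication map. -/
def IsSepSection (φ : A →+* B) (ρ : B →+ SepTensor φ) : Prop :=
  (∀ b, sepMul φ (ρ b) = b) ∧
    (∀ (b₁ c b₂ : B), ρ (b₁ * c * b₂) = sepLMul φ b₁ (sepRMul φ b₂ (ρ c)))

/-- The extension `φ : A →+* B` is separable: the multiplication map
`B ⊗[A] B → B` splits as a bimodule map. -/
def IsSeparableExt (φ : A →+* B) : Prop := ∃ ρ : B →+ SepTensor φ, IsSepSection φ ρ

/-- The extension `φ : A →+* B` of graded rings is graded-separable: the multiplication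
map `B ⊗[A] B → B` splits as a map of graded bimodules. -/
def IsGrSeparable (φ : A →+* B) (𝒝 : ℤ → AddSubgroup B) : Prop :=
  ∃ ρ : B →+ SepTensor φ, IsSepSection φ ρ ∧
    ∀ (n : ℤ), ∀ b ∈ 𝒝 n, ρ b ∈ sepGrading φ 𝒝 n

/-- The dg-extension `φ : (A,d_A) →  (B,d_B)` is dg-separable: the multiplication map
`B ⊗[A] B → B` splits as a map of differential graded bimodules. -/
def IsDGSeparable (φ : A →+* B) (𝒝 : ℤ → AddSubgroup B) [GradedRing 𝒝]
    (dB : B →+ B) : Prop :=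
  ∃ D : SepTensor φ →+ SepTensor φ, IsSepDiff φ 𝒝 dB D ∧
    ∃ ρ : B →+ SepTensor φ, IsSepSection φ ρ ∧
      (∀ (n : ℤ), ∀ b ∈ 𝒝 n, ρ b ∈ sepGrading φ 𝒝 n) ∧
      (∀ b, D (ρ b) = ρ (dB b))

end DGCore

section DGModules

/-- A differential graded module over the dg-ring `(A, 𝒜, d)`. -/
structure IsDGModuleStr {A : Type} [Ring A] (𝒜 : ℤ → AddSubgroup A) (d : A →+ A)
    {M : Type} [AddCommGroup M] [Module A M] (ℳ : ℤ → AddSubgroup M) (δ : M →+ M) :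
    Prop where
  δ_sq : ∀ m, δ (δ m) = 0
  δ_mem : ∀ (i : ℤ), ∀ m ∈ ℳ i, δ m ∈ ℳ (i + 1)
  smul_mem : ∀ (i j : ℤ) (a : A) (m : M), a ∈ 𝒜 i → m ∈ ℳ j → a • m ∈ ℳ (i + j)
  leibniz : ∀ (i : ℤ) (a : A) (m : M), a ∈ 𝒜 i →
    δ (a • m) = d a • m + ((Int.negOnePow i : ℤ)) • (a • δ m)

/-- A homomorphism of dg-modules over the ring `R`: an `R`-linear map of degree `0`
commuting with the differentials. -/
def IsDGModHom (R : Type) [Ring R] {M N : Type} [AddCommGroup M] [AddCommGroup N]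
    [Module R M] [Module R N] (ℳ : ℤ → AddSubgroup M) (δM : M →+ M)
    (𝒩 : ℤ → AddSubgroup N) (δN : N →+ N) (f : M →+ N) : Prop :=
  (∀ (r : R) (m : M), f (r • m) = r • f m) ∧ (∀ (i : ℤ), ∀ m ∈ ℳ i, f m ∈ 𝒩 i) ∧
    (∀ m, f (δM m) = δN (f m))

/-- A homomorphism of dg-modules for the structures restricted along `φ : A →+* B`:
an `A`-linear (via `φ`) map of degree `0` commuting with the differentials. -/
def IsDGModHomOver {A B : Type} [Ring A] [Ring B] (φ : A →+* B) {M N : Type}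
    [AddCommGroup M] [AddCommGroup N] [Module B M] [Module B N]
    (ℳ : ℤ → AddSubgroup M) (δM : M →+ M) (𝒩 : ℤ → AddSubgroup N) (δN : N →+ N)
    (f : M →+ N) : Prop :=
  (∀ (a : A) (m : M), f (φ a • m) = φ a • f m) ∧ (∀ (i : ℤ), ∀ m ∈ ℳ i, f m ∈ 𝒩 i) ∧
    (∀ m, f (δM m) = δN (f m))

end DGModules


section SplitAux

variable {A B : Type} [Ring A] [Ring B] (φ : A →+* B)
variable {M N : Type} [AddCommGroup M] [AddCommGroup N] [Module B M] [Module B N]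
variable (s : N →+ M)

/-- The map `B ⊗ B → M`, `b ⊗ b' ↦ b • s (b' • n)`. -/
noncomputable def auxT (n : N) : B ⊗[ℤ] B →ₗ[ℤ] M :=
  TensorProduct.lift
    (LinearMap.mk₂ ℤ (fun b b' => b • s (b' • n))
      (fun b₁ b₂ b' => add_smul b₁ b₂ _)
      (fun c b b' => smul_assoc c b _)
      (fun b b₁ b₂ => by rw [add_smul, map_add, smul_add])
      (fun c b b' => by rw [smul_assoc, map_zsmul, smul_comm]))

lemma auxT_tmul (n : N) (b b' : B) : auxT s n (b ⊗ₜ[ℤ] b') = b • s (b' • n) := rfl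

/-- The induced map `B ⊗[A] B → M` when `s` is `A`-linear along `φ`. -/
noncomputable def auxTQ (hs : ∀ (a : A) (m : N), s (φ a • m) = φ a • s m) (n : N) :
    SepTensor φ →ₗ[ℤ] M :=
  Submodule.liftQ _ (auxT s n) (by
    rw [sepRel, Submodule.span_le]
    rintro x ⟨b, b', a, rfl⟩
    simp only [SetLike.mem_coe, LinearMap.mem_ker, map_sub, auxT_tmul]
    rw [mul_smul, mul_smul, hs, sub_self])

lemma auxTQ_mk (hs : ∀ (a : A) (m : N), s (φ a • m) = φ a • s m) (n : N)
    (y : B ⊗[ℤ] B) :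
    auxTQ φ s hs n (Submodule.Quotient.mk y) = auxT s n y :=
  Submodule.liftQ_apply _ _ _

lemma auxTQ_sepMk (hs : ∀ (a : A) (m : N), s (φ a • m) = φ a • s m) (n : N)
    (y : B ⊗[ℤ] B) :
    auxTQ φ s hs n (sepMk φ y) = auxT s n y :=
  auxTQ_mk φ s hs n y

lemma auxTQ_add (hs : ∀ (a : A) (m : N), s (φ a • m) = φ a • s m) (n₁ n₂ : N)
    (x : SepTensor φ) :
    auxTQ φ s hs (n₁ + n₂) x = auxTQ φ s hs n₁ x + auxTQ φ s hs n₂ x := by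
  obtain ⟨y, rfl⟩ := Submodule.Quotient.mk_surjective _ x
  rw [auxTQ_mk, auxTQ_mk, auxTQ_mk]
  induction y using TensorProduct.induction_on with
  | zero => simp
  | tmul b b' => rw [auxT_tmul, auxT_tmul, auxT_tmul, smul_add, map_add, smul_add]
  | add y₁ y₂ h₁ h₂ => rw [map_add, map_add, map_add, h₁, h₂]; abel

lemma auxTQ_lmul (hs : ∀ (a : A) (m : N), s (φ a • m) = φ a • s m) (n : N) (b : B)
    (x : SepTensor φ) :
    auxTQ φ s hs n (sepLMul φ b x) = b • auxTQ φ s hs n x := by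
  obtain ⟨y, rfl⟩ := Submodule.Quotient.mk_surjective _ x
  show auxT s n (TensorProduct.map (LinearMap.mulLeft ℤ b) LinearMap.id y) = b • auxT s n y
  induction y using TensorProduct.induction_on with
  | zero => simp
  | tmul b₀ b' =>
    simp only [TensorProduct.map_tmul, LinearMap.mulLeft_apply, LinearMap.id_apply,
      auxT_tmul, mul_smul]
  | add y₁ y₂ h₁ h₂ => rw [map_add, map_add, map_add, h₁, h₂, smul_add]

lemma auxTQ_rmul (hs : ∀ (a : A) (m : N), s (φ a • m) = φ a • s m) (n : N) (b : B)
    (x : SepTensor φ) :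
    auxTQ φ s hs (b • n) x = auxTQ φ s hs n (sepRMul φ b x) := by
  obtain ⟨y, rfl⟩ := Submodule.Quotient.mk_surjective _ x
  show auxT s (b • n) y = auxT s n (TensorProduct.map LinearMap.id (LinearMap.mulRight ℤ b) y)
  induction y using TensorProduct.induction_on with
  | zero => simp
  | tmul b₀ b' =>
    simp only [TensorProduct.map_tmul, LinearMap.mulRight_apply, LinearMap.id_apply,
      auxT_tmul, mul_smul]
  | add y₁ y₂ h₁ h₂ => rw [map_add, map_add, map_add, h₁, h₂]

lemma sepLMul_one (x : SepTensor φ) : sepLMul φ (1 : B) x = x := by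
  obtain ⟨y, rfl⟩ := Submodule.Quotient.mk_surjective _ x
  erw [sepLMul, Submodule.mapQ_apply, LinearMap.mulLeft_one, TensorProduct.map_id,
    LinearMap.id_apply]

lemma sepRMul_one (x : SepTensor φ) : sepRMul φ (1 : B) x = x := by
  obtain ⟨y, rfl⟩ := Submodule.Quotient.mk_surjective _ x
  erw [sepRMul, Submodule.mapQ_apply, LinearMap.mulRight_one, TensorProduct.map_id,
    LinearMap.id_apply]

lemma auxTQ_g (hs : ∀ (a : A) (m : N), s (φ a • m) = φ a • s m) {g : M →+ N}
    (hgB : ∀ (b : B) (m : M), g (b • m) = b • g m) (hgs : ∀ n, g (s n) = n)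
    (n : N) (x : SepTensor φ) :
    g (auxTQ φ s hs n x) = sepMul φ x • n := by
  obtain ⟨y, rfl⟩ := Submodule.Quotient.mk_surjective _ x
  show g (auxT s n y) = TensorProduct.lift (LinearMap.mul ℤ B) y • n
  induction y using TensorProduct.induction_on with
  | zero => simp
  | tmul b b' =>
    rw [auxT_tmul, hgB, hgs, TensorProduct.lift.tmul]
    simp [mul_smul]
  | add y₁ y₂ h₁ h₂ => rw [map_add, map_add, map_add, h₁, h₂, add_smul]

lemma auxTQ_grading {𝒩 : ℤ → AddSubgroup N} {ℳ : ℤ → AddSubgroup M}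
    (𝒝 : ℤ → AddSubgroup B)
    (hMs : ∀ (i j : ℤ) (b : B) (m : M), b ∈ 𝒝 i → m ∈ ℳ j → b • m ∈ ℳ (i + j))
    (hNs : ∀ (i j : ℤ) (b : B) (m : N), b ∈ 𝒝 i → m ∈ 𝒩 j → b • m ∈ 𝒩 (i + j))
    (hsgr : ∀ i : ℤ, ∀ m ∈ 𝒩 i, s m ∈ ℳ i)
    (hs : ∀ (a : A) (m : N), s (φ a • m) = φ a • s m)
    (i : ℤ) (n : N) (hn : n ∈ 𝒩 i) {x : SepTensor φ}
    (hx : x ∈ sepGrading φ 𝒝 0) : auxTQ φ s hs n x ∈ ℳ i := by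
  unfold sepGrading at hx
  induction hx using AddSubgroup.closure_induction with
  | mem x hx =>
    obtain ⟨j, j', b, b', hb, hb', hjj', rfl⟩ := hx
    rw [auxTQ_sepMk, auxT_tmul]
    have h2 := hMs _ _ _ _ hb (hsgr _ _ (hNs _ _ _ _ hb' hn))
    have hji : j + (j' + i) = i := by omega
    rwa [hji] at h2
  | zero => rw [map_zero]; exact zero_mem _
  | add x y hx hy ihx ihy => rw [map_add]; exact add_mem ihx ihy
  | neg x hx ih => rw [map_neg]; exact neg_mem ih

lemma auxTQ_diff (𝒝 : ℤ → AddSubgroup B) [GradedRing 𝒝] (dB : B →+ B)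
    (δM : M →+ M) (δN : N →+ N)
    (hMl : ∀ (i : ℤ) (b : B) (m : M), b ∈ 𝒝 i →
      δM (b • m) = dB b • m + ((Int.negOnePow i : ℤ)) • (b • δM m))
    (hNl : ∀ (i : ℤ) (b : B) (m : N), b ∈ 𝒝 i →
      δN (b • m) = dB b • m + ((Int.negOnePow i : ℤ)) • (b • δN m))
    (hsd : ∀ m, s (δN m) = δM (s m))
    (hs : ∀ (a : A) (m : N), s (φ a • m) = φ a • s m)
    {D : SepTensor φ →+ SepTensor φ} (hD : IsSepDiff φ 𝒝 dB D)
    (n : N) {x : SepTensor φ} (hx : x ∈ sepGrading φ 𝒝 0) :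
    δM (auxTQ φ s hs n x) = auxTQ φ s hs n (D x) + auxTQ φ s hs (δN n) x := by
  unfold sepGrading at hx
  induction hx using AddSubgroup.closure_induction with
  | mem x hx =>
    obtain ⟨j, j', b, b', hb, hb', hjj', rfl⟩ := hx
    have huv : ((Int.negOnePow j : ℤ)) * ((Int.negOnePow j' : ℤ)) = 1 := by
      rw [← Units.val_mul, ← Int.negOnePow_add, hjj', Int.negOnePow_zero, Units.val_one]
    have key : ∀ z : M, ((Int.negOnePow j : ℤ)) • (b • (((Int.negOnePow j' : ℤ)) • z))
        = b • z := by
      intro z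
      rw [smul_comm b, smul_smul, huv, one_smul]
    have hpre : sepDiffPre 𝒝 dB (b ⊗ₜ[ℤ] b') = dB b ⊗ₜ[ℤ] b' + signMap 𝒝 b ⊗ₜ[ℤ] dB b' := rfl
    rw [hD, hpre]
    simp only [LinearMap.add_apply, TensorProduct.map_tmul, LinearMap.id_apply,
      AddMonoidHom.coe_toIntLinearMap, auxTQ_sepMk, map_add, auxT_tmul,
      signMap_of_mem 𝒝 hb]
    rw [hMl j b _ hb, ← hsd, hNl j' b' n hb', map_add, map_zsmul, smul_add, smul_add,
      key, smul_assoc]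
    abel
  | zero => simp
  | add x y hx hy ihx ihy => simp only [map_add, ihx, ihy]; abel
  | neg x hx ih => simp only [map_neg, ih, neg_add]

end SplitAux

/-- For a dg-separable dg-extension `φ : (A,d_A) → (B,d_B)` of
dg-algebras over a graded-commutative dg-division ring `(K,d_K)`, a short exact
sequence of dg-modules over `(B,d_B)` splits if and only if it splits after
restriction along `φ` to `(A,d_A)`. -/
theorem ses_splits_iff_splits_restricted
    {K A B : Type} [Ring K] [Ring A] [Ring B]
    (𝒦 : ℤ → AddSubgroup K) [GradedRing 𝒦] (dK : K →+ K)
    (𝒜 : ℤ → AddSubgroup A) [GradedRing 𝒜] (dA : A →+ A)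
    (𝒝 : ℤ → AddSubgroup B) [GradedRing 𝒝] (dB : B →+ B)
    (hK : IsDGRing 𝒦 dK) (hKcomm : IsGradedComm 𝒦) (hKdiv : IsDGDivisionRing 𝒦 dK)
    (hA : IsDGRing 𝒜 dA) (hB : IsDGRing 𝒝 dB)
    (κA : K →+* A) (hκA : IsDGHom 𝒦 dK 𝒜 dA κA)
    (κB : K →+* B) (hκB : IsDGHom 𝒦 dK 𝒝 dB κB)
    (φ : A →+* B) (hφ : IsDGHom 𝒜 dA 𝒝 dB φ) (hcompat : φ.comp κA = κB)
    (hsep : IsDGSeparable φ 𝒝 dB)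
    {L M N : Type} [AddCommGroup L] [AddCommGroup M] [AddCommGroup N]
    [Module B L] [Module B M] [Module B N]
    (ℒ : ℤ → AddSubgroup L) (δL : L →+ L) [DirectSum.Decomposition ℒ]
    (ℳ : ℤ → AddSubgroup M) (δM : M →+ M) [DirectSum.Decomposition ℳ]
    (𝒩 : ℤ → AddSubgroup N) (δN : N →+ N) [DirectSum.Decomposition 𝒩]
    (hL : IsDGModuleStr 𝒝 dB ℒ δL) (hM : IsDGModuleStr 𝒝 dB ℳ δM)
    (hN : IsDGModuleStr 𝒝 dB 𝒩 δN)
    (f : L →+ M) (g : M →+ N)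
    (hf : IsDGModHom B ℒ δL ℳ δM f) (hg : IsDGModHom B ℳ δM 𝒩 δN g)
    (hinj : Function.Injective f) (hsurj : Function.Surjective g)
    (hexact : ∀ m : M, g m = 0 ↔ ∃ x, f x = m) :
    (∃ s : N →+ M, IsDGModHom B 𝒩 δN ℳ δM s ∧ ∀ n, g (s n) = n) ↔
      (∃ s : N →+ M, IsDGModHomOver φ 𝒩 δN ℳ δM s ∧ ∀ n, g (s n) = n) := by
  constructor
  · rintro ⟨s, ⟨hs1, hs2, hs3⟩, hsec⟩
    exact ⟨s, ⟨fun a m => hs1 (φ a) m, hs2, hs3⟩, hsec⟩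
  · rintro ⟨s, ⟨hsA, hsgr, hsd⟩, hsec⟩
    obtain ⟨D, hD, ρ, ⟨hρmul, hρbi⟩, hρgr, hρd⟩ := hsep
    have one_mem : (1 : B) ∈ 𝒝 0 := SetLike.one_mem_graded _
    have hdB1 : dB (1 : B) = 0 := by
      have h := hB.leibniz 0 1 1 one_mem
      simp only [mul_one, one_mul, Int.negOnePow_zero, Units.val_one, one_smul] at h
      have h' : dB (1 : B) + 0 = dB 1 + dB 1 := by rw [add_zero]; exact h
      exact (add_left_cancel h').symm
    have hρ1 : ρ 1 ∈ sepGrading φ 𝒝 0 := hρgr 0 1 one_mem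
    refine ⟨AddMonoidHom.mk' (fun n => auxTQ φ s hsA n (ρ 1))
      (fun n₁ n₂ => auxTQ_add φ s hsA n₁ n₂ (ρ 1)), ⟨?_, ?_, ?_⟩, ?_⟩
    · intro b n
      show auxTQ φ s hsA (b • n) (ρ 1) = b • auxTQ φ s hsA n (ρ 1)
      have h1 : sepRMul φ b (ρ 1) = ρ b := by
        have h := hρbi 1 1 b
        rw [one_mul, one_mul, sepLMul_one] at h
        exact h.symm
      have h2 : ρ b = sepLMul φ b (ρ 1) := by
        have h := hρbi b 1 1
        rwa [mul_one, mul_one, sepRMul_one] at h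
      rw [auxTQ_rmul, h1, h2, auxTQ_lmul]
    · intro i n hn
      exact auxTQ_grading φ s 𝒝 hM.smul_mem hN.smul_mem hsgr hsA i n hn hρ1
    · intro n
      show auxTQ φ s hsA (δN n) (ρ 1) = δM (auxTQ φ s hsA n (ρ 1))
      rw [auxTQ_diff φ s 𝒝 dB δM δN hM.leibniz hN.leibniz hsd hsA hD n hρ1,
        hρd, hdB1, map_zero, map_zero, zero_add]
    · intro n
      show g (auxTQ φ s hsA n (ρ 1)) = n
      rw [auxTQ_g φ s hsA hg.1 hsec n (ρ 1), hρmul 1, one_smul]
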